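/- (Key concavity estimate) Let α ∈ (0,1) and φ(x) = C_1 |x|^α on R^d with C_1 > 0. There exist η_1, η_2 ∈ (0,1/2) depending only on α such that for every a ∈ R^d \ {0} and every z in the cone C = {z : |z| < η_1|a|, |z·a| ≥ (1-η_2)|a||z|}, one has φ(a + 2z) + φ(a - 2z) - 2φ(a) ≤ -2^{α-3} C_1 α(1-α) |a|^{α-2} |z|^2. -/

import Mathlib

open MeasureTheory Real Filter
open scoped RealInnerProductSpace ENNReal NNReal Topology

noncomputable section

set_option maxHeartbeats 1000000

abbrev Ed (d : ℕ) := EuclideanSpace ℝ (Fin d)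

/-- Concave tangent line bound: for `0 ≤ p ≤ 1`, `y ^ p ≤ x ^ p + p x^(p-1) (y-x)`. -/
lemma tangentA {p x y : ℝ} (hp0 : 0 ≤ p) (hp1 : p ≤ 1) (hx : 0 < x) (hy : 0 ≤ y) :
    y ^ p ≤ x ^ p + p * x ^ (p - 1) * (y - x) := by
  have hs : -1 ≤ y / x - 1 := by
    have : 0 ≤ y / x := div_nonneg hy hx.le
    linarith
  have h := rpow_one_add_le_one_add_mul_self hs hp0 hp1
  have hyx : (1 + (y / x - 1)) = y / x := by ring
  rw [hyx, Real.div_rpow hy hx.le] at h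
  have hxp : 0 < x ^ p := Real.rpow_pos_of_pos hx p
  rw [div_le_iff₀ hxp] at h
  have hx1 : x ^ p / x = x ^ (p - 1) := by
    rw [Real.rpow_sub hx, Real.rpow_one]
  calc y ^ p ≤ (1 + p * (y / x - 1)) * x ^ p := h
    _ = x ^ p + p * (x ^ p / x) * (y - x) := by field_simp
    _ = x ^ p + p * x ^ (p - 1) * (y - x) := by rw [hx1]

/-- Convex tangent line bound for negative exponents in `(-1, 0)`. -/
lemma tangentB {p x y : ℝ} (hp0 : -1 ≤ p) (hp1 : p ≤ 0) (hx : 0 < x) (hy : 0 < y) :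
    x ^ p + p * x ^ (p - 1) * (y - x) ≤ y ^ p := by
  set s : ℝ := y / x - 1 with hsdef
  have hs : -1 < s := by
    have : 0 < y / x := div_pos hy hx
    simp only [hsdef]; linarith
  have hq0 : 0 ≤ -p := by linarith
  have hq1 : -p ≤ 1 := by linarith
  have h := rpow_one_add_le_one_add_mul_self hs.le hq0 hq1
  have h1s : (0:ℝ) < 1 + s := by linarith
  have hpos : 0 < (1 + s) ^ (-p) := Real.rpow_pos_of_pos h1s _
  -- (1+s)^p ≥ 1 + p*s
  have hinv : (1 + s) ^ p * (1 + s) ^ (-p) = 1 := by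
    rw [← Real.rpow_add h1s]; simp
  have hppos : 0 < (1 + s) ^ p := Real.rpow_pos_of_pos h1s _
  have key : 1 + p * s ≤ (1 + s) ^ p := by
    have h2 : 0 < 1 + (-p) * s := lt_of_lt_of_le hpos h
    nlinarith [mul_le_mul_of_nonneg_left h hppos.le, sq_nonneg (p * s)]
  -- scale back
  have hyx : 1 + s = y / x := by simp only [hsdef]; ring
  have hxp : 0 < x ^ p := Real.rpow_pos_of_pos hx p
  have hys : (1 + s) ^ p = y ^ p / x ^ p := by
    rw [hyx, Real.div_rpow hy.le hx.le]
  rw [hys, le_div_iff₀ hxp] at key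
  have hx1 : x ^ p / x = x ^ (p - 1) := by
    rw [Real.rpow_sub hx, Real.rpow_one]
  calc x ^ p + p * x ^ (p - 1) * (y - x)
      = x ^ p + p * (x ^ p / x) * (y - x) := by rw [hx1]
    _ = (1 + p * s) * x ^ p := by simp only [hsdef]; field_simp
    _ ≤ y ^ p := key

/-- Second difference bound: `(m+δ)^β + (m-δ)^β - 2 m^β ≤ β(β-1)(m+δ)^(β-2) δ²`. -/
lemma secondDiff {β m δ : ℝ} (hβ0 : 0 < β) (hβ1 : β < 1) (hδ : 0 ≤ δ) (hv : 0 < m - δ) :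
    (m + δ) ^ β + (m - δ) ^ β ≤ 2 * m ^ β + β * (β - 1) * (m + δ) ^ (β - 2) * δ ^ 2 := by
  set c : ℝ := β * (β - 1) * (m + δ) ^ (β - 2) with hc
  set G : ℝ → ℝ := fun t => (m + t) ^ β + (m - t) ^ β - c * t ^ 2 with hG
  have hm : 0 < m := by linarith
  have hMpos : 0 < m + δ := by linarith
  have hderiv : ∀ t ∈ Set.Icc (0:ℝ) δ,
      HasDerivAt G (β * (m + t) ^ (β - 1) - β * (m - t) ^ (β - 1) - c * (2 * t)) t := by
    intro t ht
    obtain ⟨ht0, htδ⟩ := ht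
    have h1 : 0 < m + t := by linarith
    have h2 : 0 < m - t := by linarith
    have d1 : HasDerivAt (fun t : ℝ => (m + t) ^ β) (β * (m + t) ^ (β - 1)) t := by
      have := (Real.hasDerivAt_rpow_const (x := m + t) (p := β)
        (Or.inl h1.ne')).comp t ((hasDerivAt_id t).const_add m)
      have h' : HasDerivAt (fun t : ℝ => (m + t) ^ β) (β * (m + t) ^ (β - 1) * 1) t := this
      simpa using h'
    have d2 : HasDerivAt (fun t : ℝ => (m - t) ^ β) (-(β * (m - t) ^ (β - 1))) t := by
      have := (Real.hasDerivAt_rpow_const (x := m - t) (p := β)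
        (Or.inl h2.ne')).comp t ((hasDerivAt_id t).neg.const_add m)
      have h' : HasDerivAt (fun t : ℝ => (m - t) ^ β) (β * (m - t) ^ (β - 1) * -1) t := this
      simpa using h'
    have d3 : HasDerivAt (fun t : ℝ => c * t ^ 2) (c * (2 * t)) t := by
      simpa [mul_comm] using (hasDerivAt_pow 2 t).const_mul c
    have H := (d1.add d2).sub d3
    have hE : β * (m + t) ^ (β - 1) + -(β * (m - t) ^ (β - 1)) - c * (2 * t)
        = β * (m + t) ^ (β - 1) - β * (m - t) ^ (β - 1) - c * (2 * t) := by ring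
    rw [← hE]
    exact H
  have hanti : AntitoneOn G (Set.Icc 0 δ) := by
    apply antitoneOn_of_deriv_nonpos (convex_Icc 0 δ)
    · exact fun t ht => ((hderiv t ht).continuousAt).continuousWithinAt
    · intro t ht
      rw [interior_Icc] at ht
      exact ((hderiv t (Set.mem_Icc_of_Ioo ht)).differentiableAt).differentiableWithinAt
    · intro t ht
      rw [interior_Icc] at ht
      obtain ⟨ht0, htδ⟩ := ht
      rw [(hderiv t ⟨ht0.le, htδ.le⟩).deriv]
      have h1 : 0 < m + t := by linarith
      have h2 : 0 < m - t := by linarith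
      have hβ1' : β - 1 ≤ 0 := by linarith
      have key := tangentB (p := β - 1) (by linarith) hβ1' h1 h2
      -- key : (m+t)^(β-1) + (β-1)*(m+t)^(β-1-1)*((m-t)-(m+t)) ≤ (m-t)^(β-1)
      have hmono : (m + δ) ^ (β - 2) ≤ (m + t) ^ (β - 2) :=
        Real.rpow_le_rpow_of_nonpos h1 (by linarith) (by linarith)
      have hexp : (β - 1 - 1 : ℝ) = β - 2 := by ring
      rw [hexp] at key
      have hp2 : 0 < (m + t) ^ (β - 2) := Real.rpow_pos_of_pos h1 _
      nlinarith [mul_le_mul_of_nonneg_left hmono (mul_nonneg ht0.le (by nlinarith : (0:ℝ) ≤ β * (1 - β)))]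
  have h0 : (0:ℝ) ∈ Set.Icc (0:ℝ) δ := Set.mem_Icc.2 ⟨le_refl _, hδ⟩
  have hδm : δ ∈ Set.Icc (0:ℝ) δ := Set.mem_Icc.2 ⟨hδ, le_refl _⟩
  have := hanti h0 hδm hδ
  simp only [hG] at this
  norm_num at this
  nlinarith [this]

/-- Numeric inequality for the parameter choice `ε = t/32`. -/
lemma numKey {t J : ℝ} (ht0 : 0 < t) (ht1 : t < 1)
    (hJ : J * (1 + 2 * (t / 32)) ^ (4:ℕ) = 1) :
    4 * (1 - t) + 4 * ((1 - t) * ((1 - t) - 2)) * J * (1 - t / 32) ^ 2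
      ≤ -(1 / 4 * (1 - t) * t) := by
  have hPpos : (0:ℝ) < (1 + 2 * (t / 32)) ^ (4:ℕ) := by positivity
  have h1t : 0 < 1 - t := by linarith
  have hp1 : 0 ≤ t * (1 - t) := mul_nonneg ht0.le h1t.le
  have hle : ∀ k : ℕ, 1 ≤ k → t ^ k ≤ t := by
    intro k hk
    calc t ^ k ≤ t ^ 1 := pow_le_pow_of_le_one ht0.le ht1.le hk
      _ = t := pow_one t
  have hp2 : t ^ 2 * (1 - t) ≤ t * (1 - t) :=
    mul_le_mul_of_nonneg_right (hle 2 (by norm_num)) h1t.le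
  have hp3 : t ^ 3 * (1 - t) ≤ t * (1 - t) :=
    mul_le_mul_of_nonneg_right (hle 3 (by norm_num)) h1t.le
  have hp4 : t ^ 4 * (1 - t) ≤ t * (1 - t) :=
    mul_le_mul_of_nonneg_right (hle 4 (by norm_num)) h1t.le
  have hp5 : t ^ 5 * (1 - t) ≤ t * (1 - t) :=
    mul_le_mul_of_nonneg_right (hle 5 (by norm_num)) h1t.le
  have key : (4 * (1 - t)) * (1 + 2 * (t / 32)) ^ (4:ℕ)
      + 4 * ((1 - t) * ((1 - t) - 2)) * (1 - t / 32) ^ 2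
      ≤ (-(1 / 4 * (1 - t) * t)) * (1 + 2 * (t / 32)) ^ (4:ℕ) := by
    nlinarith [hp1, hp2, hp3, hp4, hp5]
  have expand : (4 * (1 - t) + 4 * ((1 - t) * ((1 - t) - 2)) * J * (1 - t / 32) ^ 2)
        * (1 + 2 * (t / 32)) ^ (4:ℕ)
      = (4 * (1 - t)) * (1 + 2 * (t / 32)) ^ (4:ℕ)
        + 4 * ((1 - t) * ((1 - t) - 2)) * (1 - t / 32) ^ 2
          * (J * (1 + 2 * (t / 32)) ^ (4:ℕ)) := by ring
  have h2 : (4 * (1 - t) + 4 * ((1 - t) * ((1 - t) - 2)) * J * (1 - t / 32) ^ 2)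
        * (1 + 2 * (t / 32)) ^ (4:ℕ)
      ≤ (-(1 / 4 * (1 - t) * t)) * (1 + 2 * (t / 32)) ^ (4:ℕ) := by
    rw [expand, hJ, mul_one]
    linarith [key]
  exact le_of_mul_le_mul_right h2 hPpos

/-- The 1D core estimate. -/
lemma oneD {α A r δ : ℝ} (hα0 : 0 < α) (hα1 : α < 1) (hA : 0 < A) (hr : 0 < r)
    (hrA : r < (1 - α) / 32 * A) (hδl : 4 * (1 - (1 - α) / 32) * A * r ≤ δ)
    (hδu : δ ≤ 4 * (A * r)) :
    (A ^ 2 + 4 * r ^ 2 + δ) ^ (α / 2) + (A ^ 2 + 4 * r ^ 2 - δ) ^ (α / 2) - 2 * A ^ α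
      ≤ -(1 / 4 * α * (1 - α) * A ^ (α - 2) * r ^ 2) := by
  set ε : ℝ := (1 - α) / 32 with hε
  have hε0 : 0 < ε := by simp only [hε]; linarith
  have hεhalf : ε < 1 / 2 := by simp only [hε]; linarith
  have h2r : 2 * r < A := by nlinarith
  set m : ℝ := A ^ 2 + 4 * r ^ 2 with hm
  have hδ0 : 0 ≤ δ := le_trans (by nlinarith) hδl
  have hv : 0 < m - δ := by nlinarith
  have hβ0 : 0 < α / 2 := by linarith
  have hβ1 : α / 2 < 1 := by linarith
  -- Step C
  have stepC := secondDiff hβ0 hβ1 hδ0 hv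
  -- Step A : m ^ (α/2) ≤ (A^2)^(α/2) + (α/2) * (A^2)^(α/2-1) * (4 r^2)
  have hA2 : 0 < A ^ 2 := by positivity
  have stepA := tangentA (p := α / 2) hβ0.le hβ1.le hA2 (by positivity : (0:ℝ) ≤ m)
  -- rpow conversions
  have e1 : (A ^ 2) ^ (α / 2) = A ^ α := by
    rw [← Real.rpow_natCast A 2, ← Real.rpow_mul hA.le]
    congr 1
    push_cast
    ring
  have e2 : (A ^ 2) ^ (α / 2 - 1) = A ^ (α - 2) := by
    rw [← Real.rpow_natCast A 2, ← Real.rpow_mul hA.le]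
    congr 1
    push_cast
    ring
  rw [e1, e2] at stepA
  have hstepA : m ^ (α / 2) ≤ A ^ α + α / 2 * A ^ (α - 2) * (4 * r ^ 2) := by
    have : m - A ^ 2 = 4 * r ^ 2 := by simp only [hm]; ring
    rw [this] at stepA
    linarith
  -- bound (m+δ)^(α/2-2) : m + δ ≤ ((1+2ε)A)^2
  have hMle : m + δ ≤ ((1 + 2 * ε) * A) ^ 2 := by nlinarith
  have hMpos : 0 < m + δ := by nlinarith
  have hone : (0:ℝ) < (1 + 2 * ε) := by linarith
  have hK : ((1 + 2 * ε) * A) ^ (α - 4) ≤ (m + δ) ^ (α / 2 - 2) := by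
    have h1 : (m + δ) ^ (α / 2 - 2) ≥ (((1 + 2 * ε) * A) ^ 2) ^ (α / 2 - 2) :=
      Real.rpow_le_rpow_of_nonpos hMpos hMle (by linarith)
    have h2 : (((1 + 2 * ε) * A) ^ 2) ^ (α / 2 - 2) = ((1 + 2 * ε) * A) ^ (α - 4) := by
      rw [← Real.rpow_natCast ((1 + 2 * ε) * A) 2, ← Real.rpow_mul (by positivity)]
      congr 1
      push_cast
      ring
    linarith [h2 ▸ h1]
  have hKsplit : ((1 + 2 * ε) * A) ^ (α - 4) = (1 + 2 * ε) ^ (α - 4) * A ^ (α - 4) :=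
    Real.mul_rpow hone.le hA.le
  -- the coefficient is negative: (α/2) * (α/2 - 1) < 0
  have hcoef : α / 2 * (α / 2 - 1) < 0 := by nlinarith
  set K : ℝ := (1 + 2 * ε) ^ (α - 4) with hKdef
  have hKpos : 0 < K := Real.rpow_pos_of_pos hone _
  -- β(β-1)(m+δ)^(β-2) ≤ β(β-1) K A^(α-4)
  have hMK : α / 2 * (α / 2 - 1) * (m + δ) ^ (α / 2 - 2)
      ≤ α / 2 * (α / 2 - 1) * (K * A ^ (α - 4)) := by
    rw [hKsplit] at hK
    exact mul_le_mul_of_nonpos_left hK hcoef.le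
  -- δ² ≥ 16 (1-ε)² A² r²
  have hδsq : (4 * (1 - ε) * A * r) ^ 2 ≤ δ ^ 2 := by
    have h1 : 0 ≤ 4 * (1 - ε) * A * r :=
      mul_nonneg (mul_nonneg (by linarith) hA.le) hr.le
    exact pow_le_pow_left₀ h1 hδl 2
  have hApos4 : 0 < A ^ (α - 4) := Real.rpow_pos_of_pos hA _
  have hAd : A ^ (α - 4) * A ^ 2 = A ^ (α - 2) := by
    rw [← Real.rpow_natCast A 2, ← Real.rpow_add hA]
    congr 1
    push_cast
    ring
  -- combine Step C bound:
  have hgain : α / 2 * (α / 2 - 1) * (m + δ) ^ (α / 2 - 2) * δ ^ 2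
      ≤ 4 * (α * (α - 2) / 4) * K * (1 - ε) ^ 2 * A ^ (α - 2) * r ^ 2 * 4 := by
    have hneg : α / 2 * (α / 2 - 1) * (K * A ^ (α - 4)) < 0 := by
      have : 0 < K * A ^ (α - 4) := by positivity
      nlinarith
    have step1 : α / 2 * (α / 2 - 1) * (m + δ) ^ (α / 2 - 2) * δ ^ 2
        ≤ α / 2 * (α / 2 - 1) * (K * A ^ (α - 4)) * δ ^ 2 :=
      mul_le_mul_of_nonneg_right hMK (sq_nonneg δ)
    have step2 : α / 2 * (α / 2 - 1) * (K * A ^ (α - 4)) * δ ^ 2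
        ≤ α / 2 * (α / 2 - 1) * (K * A ^ (α - 4)) * (16 * (1 - ε) ^ 2 * A ^ 2 * r ^ 2) := by
      have h16 : (4 * (1 - ε) * A * r) ^ 2 = 16 * (1 - ε) ^ 2 * A ^ 2 * r ^ 2 := by ring
      rw [← h16]
      exact mul_le_mul_of_nonpos_left hδsq hneg.le
    have heq : α / 2 * (α / 2 - 1) * (K * A ^ (α - 4)) * (16 * (1 - ε) ^ 2 * A ^ 2 * r ^ 2)
        = 4 * (α * (α - 2) / 4) * K * (1 - ε) ^ 2 * A ^ (α - 2) * r ^ 2 * 4 := by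
      rw [← hAd]; ring
    linarith [step1.trans (step2.trans_eq heq)]
  -- numeric inequality
  have hKlow : ((1 + 2 * ε) ^ (4:ℕ))⁻¹ ≤ K := by
    have h1 : (1 + 2 * ε) ^ (-(4:ℝ)) ≤ (1 + 2 * ε) ^ (α - 4) :=
      Real.rpow_le_rpow_of_exponent_le (by linarith) (by linarith)
    have h2 : (1 + 2 * ε) ^ (-(4:ℝ)) = ((1 + 2 * ε) ^ (4:ℕ))⁻¹ := by
      rw [show (-(4:ℝ)) = -((4:ℕ):ℝ) by norm_num, Real.rpow_neg hone.le, Real.rpow_natCast]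
    linarith [h2 ▸ h1]
  have hnum : 4 * α + 4 * (α * (α - 2)) * K * (1 - ε) ^ 2 ≤ -(1 / 4 * α * (1 - α)) := by
    have hC : 4 * (α * (α - 2)) ≤ 0 := by nlinarith
    have base : 4 * (α * (α - 2)) * K ≤ 4 * (α * (α - 2)) * ((1 + 2 * ε) ^ (4:ℕ))⁻¹ :=
      mul_le_mul_of_nonpos_left hKlow hC
    have hmulsq := mul_le_mul_of_nonneg_right base (sq_nonneg (1 - ε))
    have hq : (0:ℝ) < (1 + 2 * ε) ^ (4:ℕ) := by positivity
    have hJ : ((1 + 2 * ε) ^ (4:ℕ))⁻¹ * (1 + 2 * ((1 - α) / 32)) ^ (4:ℕ) = 1 := by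
      rw [← hε]
      exact inv_mul_cancel₀ hq.ne'
    have hnk := numKey (t := 1 - α) (by linarith) (by linarith) hJ
    rw [show (1 - (1 - α) : ℝ) = α by ring] at hnk
    rw [← hε] at hnk
    linarith [hmulsq, hnk]
  -- put everything together
  have hApos2 : 0 < A ^ (α - 2) := Real.rpow_pos_of_pos hA _
  have hr2 : 0 < r ^ 2 := by positivity
  calc (m + δ) ^ (α / 2) + (m - δ) ^ (α / 2) - 2 * A ^ α
      ≤ 2 * m ^ (α / 2) + α / 2 * (α / 2 - 1) * (m + δ) ^ (α / 2 - 2) * δ ^ 2 - 2 * A ^ α := by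
        linarith [stepC]
    _ ≤ 2 * (A ^ α + α / 2 * A ^ (α - 2) * (4 * r ^ 2))
        + 4 * (α * (α - 2) / 4) * K * (1 - ε) ^ 2 * A ^ (α - 2) * r ^ 2 * 4 - 2 * A ^ α := by
        linarith [hstepA, hgain]
    _ = (4 * α + 4 * (α * (α - 2)) * K * (1 - ε) ^ 2) * (A ^ (α - 2) * r ^ 2) := by ring
    _ ≤ -(1 / 4 * α * (1 - α)) * (A ^ (α - 2) * r ^ 2) := by
        have hposAr : (0:ℝ) ≤ A ^ (α - 2) * r ^ 2 := by positivity
        exact mul_le_mul_of_nonneg_right hnum hposAr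
    _ = -(1 / 4 * α * (1 - α) * A ^ (α - 2) * r ^ 2) := by ring

/-- Key concavity estimate: for `φ(x) = C₁|x|^α`, `α ∈ (0,1)`, there exist
`η₁, η₂ ∈ (0,1/2)` depending only on `α` such that for `a ≠ 0` and `z` in the cone
`{z : |z| < η₁|a|, |z·a| ≥ (1-η₂)|a||z|}`,
`φ(a+2z) + φ(a-2z) - 2φ(a) ≤ -2^{α-3} C₁ α(1-α)|a|^{α-2}|z|²`. -/
theorem stmt8 (d : ℕ) (hd : 1 ≤ d) (α : ℝ) (hα0 : 0 < α) (hα1 : α < 1) :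
    ∃ η₁ η₂ : ℝ, η₁ ∈ Set.Ioo (0 : ℝ) (1 / 2) ∧ η₂ ∈ Set.Ioo (0 : ℝ) (1 / 2) ∧
      ∀ C₁ : ℝ, 0 < C₁ → ∀ a z : Ed d, a ≠ 0 →
        ‖z‖ < η₁ * ‖a‖ → (1 - η₂) * ‖a‖ * ‖z‖ ≤ |⟪z, a⟫| →
        C₁ * ‖a + (2 : ℝ) • z‖ ^ α + C₁ * ‖a - (2 : ℝ) • z‖ ^ α - 2 * (C₁ * ‖a‖ ^ α) ≤
          -(2 ^ (α - 3) * C₁ * α * (1 - α) * ‖a‖ ^ (α - 2) * ‖z‖ ^ 2) := by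
  set ε : ℝ := (1 - α) / 32 with hε
  have hε0 : 0 < ε := by simp only [hε]; linarith
  have hεhalf : ε < 1 / 2 := by simp only [hε]; linarith
  refine ⟨ε, ε, ⟨hε0, hεhalf⟩, ⟨hε0, hεhalf⟩, ?_⟩
  intro C₁ hC₁ a z ha hz1 hz2
  by_cases hz0 : z = 0
  · subst hz0
    simp only [smul_zero, add_zero, sub_zero, norm_zero]
    norm_num
    have h : C₁ * ‖a‖ ^ α + C₁ * ‖a‖ ^ α = 2 * (C₁ * ‖a‖ ^ α) := by ring
    linarith
  have hr : 0 < ‖z‖ := norm_pos_iff.2 hz0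
  set A : ℝ := ‖a‖ with hAdef
  set r : ℝ := ‖z‖ with hrdef
  have hA : 0 < A := by simp only [hAdef]; exact norm_pos_iff.2 ha
  have hr0 : 0 ≤ r := norm_nonneg z
  set w : ℝ := ⟪a, z⟫ with hwdef
  have hcomm : ⟪z, a⟫ = w := real_inner_comm a z
  rw [hcomm] at hz2
  have hCS : |w| ≤ A * r := abs_real_inner_le_norm a z
  -- norm expansions
  have hu2 : ‖a + (2:ℝ) • z‖ ^ 2 = A ^ 2 + 4 * w + 4 * r ^ 2 := by
    rw [hAdef, hrdef, hwdef, norm_add_sq_real, real_inner_smul_right, norm_smul]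
    simp only [Real.norm_ofNat]
    ring
  have hv2 : ‖a - (2:ℝ) • z‖ ^ 2 = A ^ 2 - 4 * w + 4 * r ^ 2 := by
    rw [hAdef, hrdef, hwdef, norm_sub_sq_real, real_inner_smul_right, norm_smul]
    simp only [Real.norm_ofNat]
    ring
  -- rpow via squares
  have hsq : ∀ x : Ed d, ‖x‖ ^ α = (‖x‖ ^ 2) ^ (α / 2) := by
    intro x
    rw [← Real.rpow_natCast ‖x‖ 2, ← Real.rpow_mul (norm_nonneg x)]
    congr 1
    push_cast
    ring
  -- main case
  set δ : ℝ := 4 * |w| with hδdef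
  have hδl : 4 * (1 - ε) * A * r ≤ δ := by
    simp only [hδdef]
    nlinarith [hz2]
  have hδu : δ ≤ 4 * (A * r) := by simp only [hδdef]; linarith
  have hrA : r < ε * A := by simp only [hrdef, hAdef]; exact hz1
  have key := oneD hα0 hα1 hA hr (by rw [← hε]; linarith) (by rw [← hε]; linarith [hδl]) hδu
  -- sum identity
  have hm : (A ^ 2 + 4 * r ^ 2 + δ) ^ (α/2) + (A ^ 2 + 4 * r ^ 2 - δ) ^ (α/2)
      = (‖a + (2:ℝ) • z‖ ^ 2) ^ (α/2) + (‖a - (2:ℝ) • z‖ ^ 2) ^ (α/2) := by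
    rcases abs_cases w with ⟨h1, _⟩ | ⟨h1, _⟩
    · rw [hu2, hv2, hδdef, h1]; ring_nf
    · rw [hu2, hv2, hδdef, h1]; ring_nf
  have hAα : (A ^ 2) ^ (α / 2) = A ^ α := by
    rw [← Real.rpow_natCast A 2, ← Real.rpow_mul hA.le]
    congr 1
    push_cast
    ring
  -- bound 2^(α-3) ≤ 1/4
  have h2b : (2:ℝ) ^ (α - 3) ≤ 1 / 4 := by
    have h1 : (2:ℝ) ^ (α - 3) ≤ (2:ℝ) ^ (-(2:ℝ)) :=
      Real.rpow_le_rpow_of_exponent_le one_le_two (by linarith)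
    have h2 : (2:ℝ) ^ (-(2:ℝ)) = 1 / 4 := by
      rw [show (-(2:ℝ)) = -((2:ℕ):ℝ) by norm_num,
        Real.rpow_neg (by norm_num : (0:ℝ) ≤ 2), Real.rpow_natCast]
      norm_num
    linarith [h2 ▸ h1]
  have hApos2 : 0 < A ^ (α - 2) := Real.rpow_pos_of_pos hA _
  have hstuff : 0 ≤ α * (1 - α) * A ^ (α - 2) * r ^ 2 :=
    mul_nonneg (mul_nonneg (mul_nonneg hα0.le (by linarith)) hApos2.le) (sq_nonneg r)
  have hmain : ‖a + (2:ℝ) • z‖ ^ α + ‖a - (2:ℝ) • z‖ ^ α - 2 * A ^ α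
      ≤ -(1 / 4 * α * (1 - α) * A ^ (α - 2) * r ^ 2) := by
    rw [hsq (a + (2:ℝ) • z), hsq (a - (2:ℝ) • z), ← hm]
    exact key
  have hfin : ‖a + (2:ℝ) • z‖ ^ α + ‖a - (2:ℝ) • z‖ ^ α - 2 * A ^ α
      ≤ -(2 ^ (α - 3) * α * (1 - α) * A ^ (α - 2) * r ^ 2) := by
    have : 2 ^ (α - 3) * α * (1 - α) * A ^ (α - 2) * r ^ 2
        ≤ 1 / 4 * α * (1 - α) * A ^ (α - 2) * r ^ 2 := by nlinarith
    linarith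
  -- multiply by C₁
  have := mul_le_mul_of_nonneg_left hfin hC₁.le
  calc C₁ * ‖a + (2:ℝ) • z‖ ^ α + C₁ * ‖a - (2:ℝ) • z‖ ^ α - 2 * (C₁ * A ^ α)
      = C₁ * (‖a + (2:ℝ) • z‖ ^ α + ‖a - (2:ℝ) • z‖ ^ α - 2 * A ^ α) := by ring
    _ ≤ C₁ * (-(2 ^ (α - 3) * α * (1 - α) * A ^ (α - 2) * r ^ 2)) := this
    _ = -(2 ^ (α - 3) * C₁ * α * (1 - α) * A ^ (α - 2) * r ^ 2) := by ring
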